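/- Let $V : \mathbb{R}^n \times 2^{[n]} \to \mathbb{R}$ be a set-valuation parametrized by item-wise private information, satisfying: (monotonicity) $V(\vec{x}, S) \leq V(\vec{x}, S \cup T)$ for all $\vec{x}, S, T$; (subadditivity) $V(\vec{x}, S\cup T) \leq V(\vec{x},S) + V(\vec{x},T)$; (no externalities) $V(\vec{x},S)$ depends only on $(x_i)_{i \in S}$; and (bounded singletons) $V(\vec{x}, \{i\}) \in [0,c]$ for all $\vec{x}, i$. Then $V$ is $c$-Lipschitz: for all $\vec{x},\vec{y}$ and sets $S, T$, $|V(\vec{x},S) - V(\vec{y},T)| \leq c\cdot(|S \cup T| - |S \cap T| + |\{i \in S \cap T : x_i \neq y_i\}|)$. -/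

import Mathlib

/-- A monotone, subadditive valuation with no externalities and singleton values
in `[0,c]` is `c`-Lipschitz. -/
theorem stmt_4 (n : ℕ) (c : ℝ) (V : (Fin n → ℝ) → Finset (Fin n) → ℝ)
    (hmono : ∀ x S T, V x S ≤ V x (S ∪ T))
    (hsub : ∀ x S T, V x (S ∪ T) ≤ V x S + V x T)
    (hext : ∀ x y S, (∀ i ∈ S, x i = y i) → V x S = V y S)
    (hbound : ∀ x i, 0 ≤ V x {i} ∧ V x {i} ≤ c) :
    ∀ (x y : Fin n → ℝ) (S T : Finset (Fin n)),
      |V x S - V y T| ≤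
        c * (((S ∪ T).card : ℝ) - (S ∩ T).card +
          ((S ∩ T).filter (fun i => x i ≠ y i)).card) := by
  intro x y S T
  rcases Nat.eq_zero_or_pos n with hn | hn
  · subst hn
    have hS : S = ∅ := Subsingleton.elim _ _
    have hT : T = ∅ := Subsingleton.elim _ _
    have hxy : V x ∅ = V y ∅ := hext x y ∅ (by simp)
    subst hS; subst hT
    simp [hxy]
  · have hc : 0 ≤ c := le_trans (hbound x ⟨0, hn⟩).1 (hbound x ⟨0, hn⟩).2
    have key : ∀ (z : Fin n → ℝ) (U W : Finset (Fin n)),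
        V z (U ∪ W) ≤ V z U + c * W.card := by
      intro z U W
      induction W using Finset.induction_on with
      | empty => simp
      | insert _ _ ha ih =>
        rename_i a W
        have h1 : U ∪ insert a W = {a} ∪ (U ∪ W) := by
          rw [Finset.union_insert, Finset.insert_eq]
        have h2 := hsub z {a} (U ∪ W)
        have h3 := (hbound z a).2
        rw [h1, Finset.card_insert_of_notMem ha]
        push_cast
        calc V z ({a} ∪ (U ∪ W)) ≤ V z {a} + V z (U ∪ W) := h2
          _ ≤ c + (V z U + c * W.card) := by linarith
          _ = V z U + c * (W.card + 1) := by ring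
    set U := (S ∩ T).filter (fun i => x i = y i) with hU
    set F := (S ∩ T).filter (fun i => ¬ x i = y i) with hF
    have hUS : U ⊆ S := (Finset.filter_subset _ _).trans Finset.inter_subset_left
    have hUT : U ⊆ T := (Finset.filter_subset _ _).trans Finset.inter_subset_right
    have hVU : V x U = V y U := hext x y U (fun i hi => (Finset.mem_filter.mp hi).2)
    have hxlow : V x U ≤ V x S := by
      have := hmono x U (S \ U)
      rwa [Finset.union_sdiff_of_subset hUS] at this
    have hylow : V y U ≤ V y T := by
      have := hmono y U (T \ U)
      rwa [Finset.union_sdiff_of_subset hUT] at this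
    have hxhigh : V x S ≤ V x U + c * (S \ U).card := by
      have := key x U (S \ U)
      rwa [Finset.union_sdiff_of_subset hUS] at this
    have hyhigh : V y T ≤ V y U + c * (T \ U).card := by
      have := key y U (T \ U)
      rwa [Finset.union_sdiff_of_subset hUT] at this
    have hUF : U.card + F.card = (S ∩ T).card :=
      Finset.card_filter_add_card_filter_not _
    have hUFr : (U.card : ℝ) + F.card = (S ∩ T).card := by exact_mod_cast hUF
    have hdS : ((S \ U).card : ℝ) ≤
        ((S ∪ T).card : ℝ) - (S ∩ T).card + F.card := by
      have h1 : (S \ U).card = S.card - U.card := Finset.card_sdiff_of_subset hUS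
      have h2 : U.card ≤ S.card := Finset.card_le_card hUS
      have h3 : S.card ≤ (S ∪ T).card := Finset.card_le_card Finset.subset_union_left
      have h1r : ((S \ U).card : ℝ) = (S.card : ℝ) - U.card := by
        rw [h1, Nat.cast_sub h2]
      have h3r : (S.card : ℝ) ≤ (S ∪ T).card := by exact_mod_cast h3
      linarith
    have hdT : ((T \ U).card : ℝ) ≤
        ((S ∪ T).card : ℝ) - (S ∩ T).card + F.card := by
      have h1 : (T \ U).card = T.card - U.card := Finset.card_sdiff_of_subset hUT
      have h2 : U.card ≤ T.card := Finset.card_le_card hUT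
      have h3 : T.card ≤ (S ∪ T).card := Finset.card_le_card Finset.subset_union_right
      have h1r : ((T \ U).card : ℝ) = (T.card : ℝ) - U.card := by
        rw [h1, Nat.cast_sub h2]
      have h3r : (T.card : ℝ) ≤ (S ∪ T).card := by exact_mod_cast h3
      linarith
    have hmS := mul_le_mul_of_nonneg_left hdS hc
    have hmT := mul_le_mul_of_nonneg_left hdT hc
    rw [abs_sub_le_iff]
    constructor <;> linarith
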